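/- Time-derivative map of Lemma 7.1: for all p, m ∈ ℕ, the derivation ∂₀ maps V^p_m into V^p_{m+1}, and for p ≥ 1 the restriction of ∂₀ to V^p_m is injective; in particular, if ω_1, …, ω_r ∈ V^p_m are linearly independent over k (p ≥ 1), then ∂₀ω_1, …, ∂₀ω_r ∈ V^p_{m+1} are linearly independent. -/

import Mathlib

open MvPolynomial

section Aux
variable {k : Type} [Field k] {σ : Type}

lemma weight_sub_single {w : σ → ℕ} {μ : σ →₀ ℕ} {v : σ} (hv : μ v ≠ 0) :
    Finsupp.weight w (μ - Finsupp.single v 1) = Finsupp.weight w μ - w v ∧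
      w v ≤ Finsupp.weight w μ := by
  have hle : Finsupp.single v 1 ≤ μ := by
    rw [Finsupp.single_le_iff]; omega
  have hcancel : μ - Finsupp.single v 1 + Finsupp.single v 1 = μ := tsub_add_cancel_of_le hle
  have hws : Finsupp.weight w (Finsupp.single v 1) = w v := by
    rw [Finsupp.weight_apply, Finsupp.sum_single_index] <;> simp
  have h2 : Finsupp.weight w (μ - Finsupp.single v 1) + w v = Finsupp.weight w μ := by
    rw [← hws, ← map_add, hcancel]
  omega

lemma mkDer_weighted (w : σ → ℕ) (g : σ → MvPolynomial σ k) (a b : ℕ)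
    (hg : ∀ v, b ≤ w v + a → IsWeightedHomogeneous w (g v) (w v + a - b))
    (hg0 : ∀ v, w v + a < b → g v = 0)
    {f : MvPolynomial σ k} {m : ℕ} (hf : IsWeightedHomogeneous w f m) :
    IsWeightedHomogeneous w (mkDerivation k g f) (m + a - b) := by
  rw [← mem_weightedHomogeneousSubmodule]
  have : mkDerivation k g f = ∑ μ ∈ f.support, mkDerivation k g (monomial μ (coeff μ f)) := by
    conv_lhs => rw [f.as_sum]
    exact map_sum _ _ _
  rw [this]
  apply Submodule.sum_mem
  intro μ hμ
  rw [mkDerivation_monomial]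
  apply Submodule.smul_mem
  rw [Finsupp.sum]
  apply Submodule.sum_mem
  intro v hv
  have hv' : μ v ≠ 0 := Finsupp.mem_support_iff.mp hv
  by_cases hb : b ≤ w v + a
  · obtain ⟨hw1, hw2⟩ := weight_sub_single (w := w) hv'
    have hμw : Finsupp.weight w μ = m := hf (Finsupp.mem_support_iff.mp hμ)
    rw [smul_eq_mul, mem_weightedHomogeneousSubmodule]
    have := (isWeightedHomogeneous_monomial w (μ - Finsupp.single v 1)
        ((μ v : k)) rfl).mul (hg v hb)
    convert this using 1
    rw [hw1, hμw]
    omega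
  · rw [hg0 v (by omega), smul_zero]
    exact Submodule.zero_mem _

lemma euler_monomial (μ : σ →₀ ℕ) (r : k) :
    mkDerivation k (fun v : σ => (X v : MvPolynomial σ k)) (monomial μ r) =
      ((Finsupp.degree μ : ℕ) : k) • monomial μ r := by
  rw [mkDerivation_monomial, Finsupp.sum]
  have hterm : ∀ v ∈ μ.support,
      monomial (μ - Finsupp.single v 1) ((μ v : k)) • (X v : MvPolynomial σ k) =
        (μ v : k) • monomial μ 1 := by
    intro v hv
    have hle : Finsupp.single v 1 ≤ μ := by
      rw [Finsupp.single_le_iff]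
      have := Finsupp.mem_support_iff.mp hv; omega
    rw [smul_eq_mul, X, monomial_mul, tsub_add_cancel_of_le hle, smul_monomial, smul_eq_mul,
      mul_one]
  rw [Finset.sum_congr rfl hterm, ← Finset.sum_smul, ← Nat.cast_sum]
  rw [Finsupp.degree_apply]
  rw [smul_comm, smul_monomial, smul_eq_mul, mul_one]

lemma euler {f : MvPolynomial σ k} {p : ℕ} (hf : IsHomogeneous f p) :
    mkDerivation k (fun v : σ => (X v : MvPolynomial σ k)) f = (p : k) • f := by
  have : mkDerivation k (fun v : σ => (X v : MvPolynomial σ k)) f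
      = ∑ μ ∈ f.support, mkDerivation k (fun v : σ => (X v : MvPolynomial σ k))
          (monomial μ (coeff μ f)) := by
    conv_lhs => rw [f.as_sum]
    exact map_sum _ _ _
  rw [this]
  conv_rhs => rw [f.as_sum]
  rw [Finset.smul_sum]
  apply Finset.sum_congr rfl
  intro μ hμ
  rw [euler_monomial]
  congr 2
  rw [Finsupp.degree_eq_weight_one]
  exact hf (Finsupp.mem_support_iff.mp hμ)

lemma lower_kill (w : σ → ℕ) (g : σ → MvPolynomial σ k) (hg : ∀ v, w v = 0 → g v = 0)
    {f : MvPolynomial σ k} (hf : IsWeightedHomogeneous w f 0) :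
    mkDerivation k g f = 0 := by
  have : mkDerivation k g f = ∑ μ ∈ f.support, mkDerivation k g (monomial μ (coeff μ f)) := by
    conv_lhs => rw [f.as_sum]
    exact map_sum _ _ _
  rw [this]
  apply Finset.sum_eq_zero
  intro μ hμ
  rw [mkDerivation_monomial]
  have hμ0 : Finsupp.weight w μ = 0 := hf (Finsupp.mem_support_iff.mp hμ)
  have hz : ∀ v ∈ μ.support, g v = 0 := by
    intro v hv
    apply hg
    have h1 : w v ≤ Finsupp.weight w μ :=
      Finsupp.le_weight_of_ne_zero' w (Finsupp.mem_support_iff.mp hv)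
    omega
  rw [Finsupp.sum]
  rw [Finset.sum_congr rfl (fun v hv => by rw [hz v hv, smul_zero])]
  simp

end Aux

/-- The time derivative `∂₀` on the ghost polynomial algebra: the unique
`k`-derivation with `∂₀ X(A, l) = X(A, l + 1)`. -/
noncomputable def timeDeriv (k : Type) [CommRing k] (N : ℕ) :
    Derivation k (MvPolynomial (Fin N × ℕ) k) (MvPolynomial (Fin N × ℕ) k) :=
  mkDerivation k (fun p : Fin N × ℕ => X (p.1, p.2 + 1))

/-- `V^p_m`: the subspace of polynomials in the ghost variables `η^{A(l)}` that are
homogeneous of degree `p` in the variables and carry exactly `m` time derivatives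
(weighted-homogeneous of weight `m` for the weight `w(A, l) = l`). -/
noncomputable def Vpm (k : Type) [Field k] (N p m : ℕ) :
    Submodule k (MvPolynomial (Fin N × ℕ) k) :=
  homogeneousSubmodule (Fin N × ℕ) k p ⊓
    weightedHomogeneousSubmodule k (fun x : Fin N × ℕ => x.2) m

/-- The time derivative maps `V^p_m` into `V^p_{m+1}`; for `p ≥ 1` it is injective
on `V^p_m`, so it sends linearly independent families of elements of `V^p_m` to
linearly independent families in `V^p_{m+1}`. -/
theorem timeDeriv_maps_and_injective
    (k : Type) [Field k] [CharZero k] (N : ℕ) (hN : 1 ≤ N) (p m : ℕ) :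
    (∀ f ∈ Vpm k N p m, timeDeriv k N f ∈ Vpm k N p (m + 1)) ∧
    (1 ≤ p → ∀ f ∈ Vpm k N p m, timeDeriv k N f = 0 → f = 0) ∧
    (1 ≤ p → ∀ (r : ℕ) (ω : Fin r → MvPolynomial (Fin N × ℕ) k),
      (∀ i, ω i ∈ Vpm k N p m) → LinearIndependent k ω →
      LinearIndependent k (fun i => timeDeriv k N (ω i))) := by
  set σ := (Fin N × ℕ)
  set w : σ → ℕ := fun x => x.2 with hw
  set gE : σ → MvPolynomial σ k := fun v => X (v.1, v.2 + 1) with hgE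
  set gL : σ → MvPolynomial σ k := fun v => (v.2 : k) • X (v.1, v.2 - 1) with hgL
  set E : Derivation k (MvPolynomial σ k) (MvPolynomial σ k) := timeDeriv k N with hE
  set L : Derivation k (MvPolynomial σ k) (MvPolynomial σ k) := mkDerivation k gL with hL
  have hEdef : E = mkDerivation k gE := rfl
  -- grading of E
  have hEmem : ∀ {q n : ℕ} {f : MvPolynomial σ k}, f ∈ Vpm k N q n →
      E f ∈ Vpm k N q (n + 1) := by
    intro q n f hf
    obtain ⟨hf1, hf2⟩ := hf
    constructor
    · have := mkDer_weighted (1 : σ → ℕ) gE 0 0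
        (fun v _ => isWeightedHomogeneous_X k (1 : σ → ℕ) (v.1, v.2 + 1))
        (fun v h => absurd h (Nat.not_lt_zero _)) (f := f) (m := q) hf1
      exact this
    · have := mkDer_weighted w gE 1 0
        (fun v _ => by simpa using isWeightedHomogeneous_X k w (v.1, v.2 + 1))
        (fun v h => absurd h (Nat.not_lt_zero _)) (f := f) (m := n) hf2
      simpa [hEdef] using this
  -- grading of L
  have hLdeg : ∀ {q : ℕ} {f : MvPolynomial σ k}, f.IsHomogeneous q →
      (L f).IsHomogeneous q := by
    intro q f hf
    have := mkDer_weighted (1 : σ → ℕ) gL 0 0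
      (fun v _ => by
        rw [← mem_weightedHomogeneousSubmodule]
        exact Submodule.smul_mem _ _ (isWeightedHomogeneous_X k (1 : σ → ℕ) (v.1, v.2 - 1)))
      (fun v h => absurd h (Nat.not_lt_zero _)) (f := f) (m := q) hf
    exact this
  have hLwt : ∀ {n : ℕ} {f : MvPolynomial σ k}, f.IsWeightedHomogeneous w n →
      (L f).IsWeightedHomogeneous w (n - 1) := by
    intro n f hf
    have := mkDer_weighted w gL 0 1
      (fun v hv => by
        rw [← mem_weightedHomogeneousSubmodule]
        refine Submodule.smul_mem _ _ ?_
        have := isWeightedHomogeneous_X (R := k) w (v.1, v.2 - 1)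
        simpa using this)
      (fun v hv => by
        have h0 : v.2 + 0 < 1 := hv
        have h1 : v.2 = 0 := by omega
        simp [hgL, h1]) (f := f) (m := n) hf
    simpa using this
  -- the commutator identity
  have hbr : (⁅L, E⁆ : Derivation k (MvPolynomial σ k) (MvPolynomial σ k)) =
      mkDerivation k (fun v : σ => (X v : MvPolynomial σ k)) := by
    apply derivation_ext
    intro v
    obtain ⟨A, l⟩ := v
    simp only [Derivation.commutator_apply, hEdef, hL, mkDerivation_X, hgE, hgL,
      Derivation.map_smul]
    cases l with
    | zero => simp
    | succ n =>
      have e1 : n + 1 + 1 - 1 = n + 1 := rfl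
      have e2 : n + 1 - 1 + 1 = n + 1 := rfl
      simp only [e1, e2]
      rw [← sub_smul]
      have : ((n + 1 + 1 : ℕ) : k) - ((n + 1 : ℕ) : k) = 1 := by push_cast; ring
      rw [this, one_smul]
  have hcomm : ∀ x : MvPolynomial σ k, x.IsHomogeneous p →
      E (L x) = L (E x) - (p : k) • x := by
    intro x hx
    have h := congrArg (fun D : Derivation k (MvPolynomial σ k) (MvPolynomial σ k) => D x) hbr
    simp only [Derivation.commutator_apply] at h
    rw [euler hx] at h
    rw [← h]
    abel
  -- injectivity
  have hinj : 1 ≤ p → ∀ f ∈ Vpm k N p m, E f = 0 → f = 0 := by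
    intro hp f hf hEf
    obtain ⟨hf1, hf2⟩ := hf
    set g : ℕ → MvPolynomial σ k := fun j => (⇑L)^[j] f with hg
    have hgsucc : ∀ j, g (j + 1) = L (g j) := fun j => Function.iterate_succ_apply' _ _ _
    have hgdeg : ∀ j, (g j).IsHomogeneous p := by
      intro j; induction j with
      | zero => exact hf1
      | succ j ih => rw [hgsucc]; exact hLdeg ih
    have hgwt : ∀ j, (g j).IsWeightedHomogeneous w (m - j) := by
      intro j; induction j with
      | zero => exact hf2
      | succ j ih =>
        rw [hgsucc]
        have := hLwt ih
        rwa [show m - j - 1 = m - (j + 1) by omega] at this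
    have htop : g (m + 1) = 0 := by
      rw [hgsucc]
      refine lower_kill w gL (fun v hv => by
        have h0 : v.2 = 0 := hv
        simp [hgL, h0]) ?_
      have := hgwt m
      rwa [Nat.sub_self] at this
    have hrec : ∀ j, E (g (j + 1)) = -(((j + 1) * p : ℕ) : k) • g j := by
      intro j; induction j with
      | zero =>
        rw [hgsucc, hcomm _ (hgdeg 0)]
        have hg0 : g 0 = f := rfl
        rw [hg0, hEf, map_zero, zero_sub]
        simp
      | succ j ih =>
        rw [hgsucc, hcomm _ (hgdeg (j + 1)), ih, Derivation.map_smul, ← hgsucc, ← sub_smul]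
        congr 1
        push_cast
        ring
    have hdown : ∀ i, i ≤ m + 1 → g (m + 1 - i) = 0 := by
      intro i
      induction i with
      | zero => simpa using htop
      | succ i ih =>
        intro hle
        have h0 := ih (by omega)
        rw [show m + 1 - i = (m + 1 - (i + 1)) + 1 by omega] at h0
        have h1 := hrec (m + 1 - (i + 1))
        rw [h0, map_zero] at h1
        have hc : (-(((m + 1 - (i + 1) + 1) * p : ℕ) : k)) ≠ 0 := by
          rw [neg_ne_zero, Nat.cast_ne_zero]
          positivity
        have := (smul_eq_zero.mp h1.symm).resolve_left hc
        exact this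
    have := hdown (m + 1) le_rfl
    simpa [hg] using this
  refine ⟨fun f hf => hEmem hf, hinj, ?_⟩
  intro hp r ω hω hli
  rw [Fintype.linearIndependent_iff]
  intro c hc
  have hsum : E (∑ i, c i • ω i) = 0 := by
    rw [map_sum]
    simp only [Derivation.map_smul]
    exact hc
  have hmem : (∑ i, c i • ω i) ∈ Vpm k N p m :=
    Submodule.sum_mem _ fun i _ => Submodule.smul_mem _ _ (hω i)
  have hzero : (∑ i, c i • ω i) = 0 := hinj hp _ hmem hsum
  exact Fintype.linearIndependent_iff.mp hli c hzero
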